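/- Let V ∈ C⁰(ℝ), let a, φ ∈ C²(I) with a > 0 satisfy the flat (k = 0) Robertson–Walker Einstein–scalar-field equations (F1) and (F2) on an interval I, and suppose there is a C¹ function ψ > 0, defined on an interval containing a(I), such that ȧ(t) = −ψ(a(t)) for all t ∈ I. Then for all t ∈ I: φ̇(t)² = (2ψ(a(t))²/a(t)²)·(1 − a(t)ψ′(a(t))/ψ(a(t))) and V(φ(t)) = (2ψ(a(t))²/a(t)²)·(1 + a(t)ψ′(a(t))/(2ψ(a(t)))). -/

import Mathlib

/-- **Reconstruction of kinetic energy and potential from the collapse profile**: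
if `a, φ` solve the flat (`k = 0`) Robertson–Walker Einstein–scalar-field
equations (F1)–(F2) on an (open) interval `I` and `ȧ = −ψ(a)` for a `C¹`
positive profile `ψ`, then
`φ̇² = (2ψ(a)²/a²)(1 − aψ′(a)/ψ(a))` and
`V(φ) = (2ψ(a)²/a²)(1 + aψ′(a)/(2ψ(a)))` on `I`. -/
theorem profile_reconstruction (V : ℝ → ℝ) (hV : Continuous V)
    (I : Set ℝ) (hI : IsOpen I) (hconn : I.OrdConnected)
    (a φ : ℝ → ℝ) (ha : ContDiff ℝ 2 a) (hφ : ContDiff ℝ 2 φ)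
    (hapos : ∀ t ∈ I, 0 < a t)
    (hF1 : ∀ t ∈ I,
      3 * ((0 : ℝ) + (deriv a t) ^ 2) / (a t) ^ 2
        = 1 / 2 * (deriv φ t) ^ 2 + V (φ t))
    (hF2 : ∀ t ∈ I,
      -(((0 : ℝ) + (deriv a t) ^ 2) + 2 * a t * deriv (deriv a) t) / (a t) ^ 2
        = 1 / 2 * (deriv φ t) ^ 2 - V (φ t))
    (ψ : ℝ → ℝ) (hψ : ContDiff ℝ 1 ψ) (hψpos : ∀ t ∈ I, 0 < ψ (a t))
    (hprof : ∀ t ∈ I, deriv a t = -ψ (a t)) :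
    ∀ t ∈ I,
      (deriv φ t) ^ 2
        = 2 * (ψ (a t)) ^ 2 / (a t) ^ 2 * (1 - a t * deriv ψ (a t) / ψ (a t)) ∧
      V (φ t)
        = 2 * (ψ (a t)) ^ 2 / (a t) ^ 2 * (1 + a t * deriv ψ (a t) / (2 * ψ (a t))) := by
  intro t ht
  have hane : a t ≠ 0 := (hapos t ht).ne'
  have hψne : ψ (a t) ≠ 0 := (hψpos t ht).ne'
  have hadiff : Differentiable ℝ a := ha.differentiable (by norm_num)
  have hψdiff : Differentiable ℝ ψ := hψ.differentiable (by norm_num)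
  -- second derivative of a
  have hev : (deriv a) =ᶠ[nhds t] (fun s => -ψ (a s)) := by
    filter_upwards [hI.mem_nhds ht] with s hs using hprof s hs
  have hdd : deriv (deriv a) t = ψ (a t) * deriv ψ (a t) := by
    rw [hev.deriv_eq]
    have h1 : deriv (fun s => -ψ (a s)) t = -(deriv ψ (a t) * deriv a t) := by
      rw [deriv.fun_neg (f := fun s => ψ (a s)),
        show (fun s => ψ (a s)) = ψ ∘ a from rfl,
        deriv_comp t (hψdiff _) (hadiff _)]
    rw [h1, hprof t ht]; ring
  have h1 := hF1 t ht
  have h2 := hF2 t ht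
  rw [hprof t ht] at h1 h2
  rw [hdd] at h2
  field_simp at h1 h2
  constructor
  · field_simp
    linear_combination (-1 / 2 : ℝ) * h1 + (-1 / 2 : ℝ) * h2
  · field_simp
    linear_combination (-1 / 4 : ℝ) * h1 + (1 / 4 : ℝ) * h2
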